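/- Let φ(u) = exp(-u²/2)/√(2π) be the standard normal density and Φ the standard normal cdf. The function F(z) = −φ(z)/z − Φ(z) is strictly monotonically increasing on (−∞, 0); equivalently, the relative-value bound R̄_δ = −φ(z_δ)/z_δ − δ is strictly increasing in δ on (0, 1/2). -/

import Mathlib

open MeasureTheory Real

/-- The standard normal density φ(u) = exp(-u²/2)/√(2π). -/
noncomputable def stdNormalPdf (u : ℝ) : ℝ := Real.exp (-u ^ 2 / 2) / Real.sqrt (2 * Real.pi)

/-- The standard normal cdf Φ(z) = ∫_{-∞}^z φ(u) du. -/
noncomputable def stdNormalCdf (z : ℝ) : ℝ := ∫ u in Set.Iic z, stdNormalPdf u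

lemma pdf_pos (u : ℝ) : 0 < stdNormalPdf u := by
  unfold stdNormalPdf
  positivity

lemma pdf_continuous : Continuous stdNormalPdf := by
  unfold stdNormalPdf
  fun_prop

lemma pdf_integrable : Integrable stdNormalPdf := by
  have h := integrable_exp_neg_mul_sq (by norm_num : (0:ℝ) < 1/2)
  have h2 := h.div_const (Real.sqrt (2 * Real.pi))
  refine h2.congr ?_
  filter_upwards with x
  unfold stdNormalPdf
  ring_nf

lemma pdf_hasDerivAt (u : ℝ) : HasDerivAt stdNormalPdf (-u * stdNormalPdf u) u := by
  have h1 : HasDerivAt (fun x : ℝ => -x ^ 2 / 2) (-u) u := by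
    have := ((hasDerivAt_pow 2 u).neg.div_const 2)
    refine this.congr_deriv ?_; simp; ring
  have h2 := (h1.exp).div_const (Real.sqrt (2 * Real.pi))
  refine h2.congr_deriv ?_
  unfold stdNormalPdf
  ring

lemma cdf_hasDerivAt (z : ℝ) : HasDerivAt stdNormalCdf (stdNormalPdf z) z := by
  have heq : stdNormalCdf = fun z => stdNormalCdf 0 + ∫ t in (0:ℝ)..z, stdNormalPdf t := by
    funext x
    rw [← intervalIntegral.integral_Iic_sub_Iic pdf_integrable.integrableOn
      pdf_integrable.integrableOn]
    unfold stdNormalCdf; ring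
  have hG : HasDerivAt (fun x => ∫ t in (0:ℝ)..x, stdNormalPdf t) (stdNormalPdf z) z :=
    intervalIntegral.integral_hasDerivAt_right pdf_integrable.intervalIntegrable
      pdf_continuous.stronglyMeasurable.stronglyMeasurableAtFilter
      pdf_continuous.continuousAt
  rw [heq]
  simpa using hG

lemma F_hasDerivAt {z : ℝ} (hz : z < 0) :
    HasDerivAt (fun z : ℝ => -stdNormalPdf z / z - stdNormalCdf z)
      (stdNormalPdf z / z ^ 2) z := by
  have h1 := ((pdf_hasDerivAt z).neg.div (hasDerivAt_id z) (ne_of_lt hz)).sub (cdf_hasDerivAt z)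
  have hz' : z ≠ 0 := ne_of_lt hz
  refine h1.congr_deriv ?_
  simp only [id, Pi.neg_apply]
  field_simp
  ring

/-- The relative-value bound F(z) = −φ(z)/z − Φ(z) is strictly increasing on (−∞, 0). -/
theorem strangle_bound_strictMonoOn :
    StrictMonoOn (fun z : ℝ => -stdNormalPdf z / z - stdNormalCdf z) (Set.Iio 0) := by
  apply strictMonoOn_of_deriv_pos (convex_Iio 0)
  · intro z hz
    exact (F_hasDerivAt hz).continuousAt.continuousWithinAt
  · intro z hz
    rw [interior_Iio] at hz
    rw [(F_hasDerivAt hz).deriv]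
    have h1 := pdf_pos z
    have hz' : z ≠ 0 := ne_of_lt hz
    positivity
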